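/- arXiv:1705.06775 — 4 statements merged into one kernel-verified Lean document; each statement's English description precedes it below -/
import Mathlib

section
/- For nonnegative integers n and m, the generating function of partitions with at most n parts, each part at most m, equals the Gaussian binomial coefficient: sum over partitions λ with m ≥ λ₁ ≥ … ≥ λ_n ≥ 0 of q^{|λ|} equals the q-binomial coefficient [n+m choose n]_q, where |λ| = λ₁ + … + λ_n. -/
/- `qq` plays the role of the formal variable `q`, as an element of the
field of rational functions over `ℚ`. -/
noncomputable def qq : RatFunc ℚ := RatFunc.X

/-- `(q)_n = ∏_{i=1}^n (1 - q^i)`. -/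
noncomputable def qp (n : ℕ) : RatFunc ℚ := ∏ i ∈ Finset.range n, (1 - qq ^ (i + 1))


lemma one_sub_qq_pow_ne (k : ℕ) : (1 : RatFunc ℚ) - qq ^ (k + 1) ≠ 0 := by
  intro h
  have h1 : qq ^ (k+1) = 1 := by linear_combination -h
  rw [qq, ← RatFunc.algebraMap_X (K := ℚ), ← map_pow, ← map_one (algebraMap (Polynomial ℚ) (RatFunc ℚ))] at h1
  have h2 := RatFunc.algebraMap_injective ℚ h1
  have := congrArg (Polynomial.eval 0) h2
  simp at this

lemma qp_ne (n : ℕ) : qp n ≠ 0 := by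
  rw [qp]
  exact Finset.prod_ne_zero_iff.mpr fun i _ => one_sub_qq_pow_ne i

lemma qp_succ (n : ℕ) : qp (n + 1) = qp n * (1 - qq ^ (n + 1)) := by
  rw [qp, Finset.prod_range_succ, qp]

def Pset (n m : ℕ) : Finset (Fin n → Fin (m + 1)) :=
  Finset.univ.filter (fun l => ∀ i j : Fin n, i ≤ j → (l j : ℕ) ≤ (l i : ℕ))

noncomputable def G (n m : ℕ) : RatFunc ℚ := ∑ l ∈ Pset n m, qq ^ (∑ i : Fin n, (l i : ℕ))

lemma G_zero (m : ℕ) : G 0 m = 1 := by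
  rw [G, Pset]
  rw [Finset.filter_true_of_mem (fun l _ i j _ => i.elim0)]
  simp

lemma G_zero' (n : ℕ) : G n 0 = 1 := by
  rw [G, Pset]
  rw [Finset.filter_true_of_mem (fun l _ i j _ => by omega)]
  have h : ∀ l : Fin n → Fin 1, ∑ i : Fin n, ((l i : ℕ)) = 0 := by
    intro l; apply Finset.sum_eq_zero; intro i _; omega
  rw [Finset.sum_congr rfl (fun l _ => by rw [h l])]
  rw [Finset.sum_const]
  simp [Finset.card_univ]

lemma mem_Pset {n m : ℕ} {l : Fin n → Fin (m+1)} :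
    l ∈ Pset n m ↔ ∀ i j : Fin n, i ≤ j → (l j : ℕ) ≤ (l i : ℕ) := by
  simp [Pset]

lemma G_rec (n m : ℕ) : G (n+1) (m+1) = G n (m+1) + qq ^ (n+1) * G (n+1) m := by
  rw [G, ← Finset.sum_filter_add_sum_filter_not (Pset (n+1) (m+1))
      (fun l => l (Fin.last n) = 0)]
  congr 1
  · -- part A : last part zero
    rw [G]
    apply Finset.sum_nbij' (i := fun l k => l (Fin.castSucc k))
      (j := fun l' => Fin.snoc l' 0)
    · intro l hl
      simp only [Finset.mem_filter, mem_Pset] at hl ⊢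
      exact fun i j hij => hl.1 _ _ (Fin.castSucc_le_castSucc_iff.mpr hij)
    · intro l' hl'
      rw [mem_Pset] at hl'
      simp only [Finset.mem_filter, mem_Pset]
      refine ⟨fun i j hij => ?_, by simp⟩
      induction j using Fin.lastCases with
      | last => simp
      | cast j' =>
        have hi : i ≠ Fin.last n := by
          intro h; rw [h] at hij
          exact absurd (lt_of_le_of_lt hij (Fin.castSucc_lt_last j')) (lt_irrefl _)
        obtain ⟨i', rfl⟩ := Fin.exists_castSucc_eq.mpr hi
        simp only [Fin.snoc_castSucc]
        exact hl' _ _ (Fin.castSucc_le_castSucc_iff.mp hij)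
    · intro l hl
      simp only [Finset.mem_filter] at hl
      funext k
      induction k using Fin.lastCases with
      | last => simp [hl.2.symm]
      | cast k' => simp
    · intro l' _
      funext k; simp
    · intro l hl
      simp only [Finset.mem_filter] at hl
      congr 1
      rw [Fin.sum_univ_castSucc, hl.2]
      simp
  · -- part B : all parts positive
    rw [G, Finset.mul_sum]
    apply Finset.sum_nbij'
      (i := fun l k => (⟨(l k : ℕ) - 1, by have := (l k).isLt; omega⟩ : Fin (m+1)))
      (j := fun l' k => (⟨(l' k : ℕ) + 1, by have := (l' k).isLt; omega⟩ : Fin (m+2)))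
    · intro l hl
      simp only [Finset.mem_filter, mem_Pset] at hl ⊢
      exact fun i j hij => Nat.sub_le_sub_right (hl.1 i j hij) 1
    · intro l' hl'
      rw [mem_Pset] at hl'
      simp only [Finset.mem_filter, mem_Pset]
      constructor
      · exact fun i j hij => by simpa using hl' i j hij
      · intro h
        have := congrArg Fin.val h
        simp at this
    · intro l hl
      simp only [Finset.mem_filter, mem_Pset] at hl
      have hpos : ∀ k, 1 ≤ (l k : ℕ) := by
        intro k
        have h1 := hl.1 k (Fin.last n) (Fin.le_last k)
        have h2 : (l (Fin.last n) : ℕ) ≠ 0 := fun h => hl.2 (Fin.ext (by simpa using h))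
        omega
      funext k
      apply Fin.ext
      simp only []
      have := hpos k
      omega
    · intro l' _
      funext k
      apply Fin.ext
      simp
    · intro l hl
      simp only [Finset.mem_filter, mem_Pset] at hl
      have hpos : ∀ k, 1 ≤ (l k : ℕ) := by
        intro k
        have h1 := hl.1 k (Fin.last n) (Fin.le_last k)
        have h2 : (l (Fin.last n) : ℕ) ≠ 0 := fun h => hl.2 (Fin.ext (by simpa using h))
        omega
      rw [← pow_add]
      congr 1
      have : ∀ k : Fin (n+1), (l k : ℕ) = ((l k : ℕ) - 1) + 1 := fun k => by
        have := hpos k; omega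
      rw [Finset.sum_congr rfl (fun k _ => this k), Finset.sum_add_distrib]
      simp [Finset.card_univ, add_comm]

noncomputable def gauss (n m : ℕ) : RatFunc ℚ := qp (n + m) / (qp n * qp m)

lemma gauss_zero (m : ℕ) : gauss 0 m = 1 := by
  have h0 : qp 0 = 1 := by simp [qp]
  rw [gauss, Nat.zero_add, h0, one_mul]
  exact div_self (qp_ne m)

lemma gauss_zero' (n : ℕ) : gauss n 0 = 1 := by
  have : qp 0 = 1 := by simp [qp]
  rw [gauss, this]
  simp only [mul_one, Nat.add_zero]
  exact div_self (qp_ne n)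

lemma gauss_rec (n m : ℕ) :
    gauss (n+1) (m+1) = gauss n (m+1) + qq ^ (n+1) * gauss (n+1) m := by
  have e1 : n + 1 + (m + 1) = (n + m + 1) + 1 := by ring
  have e2 : n + (m + 1) = n + m + 1 := by ring
  have e3 : n + 1 + m = n + m + 1 := by ring
  rw [gauss, gauss, gauss, e1, e2, e3, qp_succ (n+m+1), qp_succ n, qp_succ m]
  have h1 := qp_ne n
  have h2 := qp_ne m
  have h3 := one_sub_qq_pow_ne n
  have h4 := one_sub_qq_pow_ne m
  field_simp
  ring

lemma G_eq_gauss (n : ℕ) : ∀ m, G n m = gauss n m := by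
  induction n with
  | zero => intro m; rw [G_zero, gauss_zero]
  | succ n ihn =>
    intro m
    induction m with
    | zero => rw [G_zero', gauss_zero']
    | succ m ihm => rw [G_rec, gauss_rec, ihn, ihm]

/-- The generating function of partitions in `P_{n,m}` (weakly decreasing
sequences `λ : Fin n → {0,…,m}`), weighted by `q^{|λ|}`, equals the Gaussian
binomial coefficient `[n+m choose n]_q = (q)_{n+m} / ((q)_n (q)_m)`. -/
theorem partition_gf_eq_gaussian_binomial (n m : ℕ) :
    ∑ l ∈ Finset.univ.filter
        (fun l : Fin n → Fin (m + 1) => ∀ i j : Fin n, i ≤ j → (l j : ℕ) ≤ (l i : ℕ)),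
      qq ^ (∑ i : Fin n, (l i : ℕ)) =
    qp (n + m) / (qp n * qp m) := by
  have := G_eq_gauss n m
  rw [G, Pset, gauss] at this
  exact this
end

section
/- For L > 0 the q-trinomial coefficient satisfies the recurrence T(n,d,L) = q^{L-d} T(n, d-1, L-1) + T(n-1, d, L-1) + q^{d-n+1} T(n-1, d+1, L-1). -/
/-- `(q)_n` for an integer index, declared to be `0` for negative `n`
(so that terms with a negative factorial index vanish upon division). -/
noncomputable def qpz (n : ℤ) : RatFunc ℚ := if 0 ≤ n then qp n.toNat else 0

/-- The Andrews–Baxter `q`-trinomial coefficient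
`T(n,d,L) = Σ_k q^{k(k+d-n)} (q)_L / ((q)_k (q)_{k+d} (q)_{L-2k-d})`,
where terms with a negative factorial index are zero.  (Any term with a
nonzero contribution has `k ≤ L`, so the range below suffices.) -/
noncomputable def qT (n d : ℤ) (L : ℕ) : RatFunc ℚ :=
  ∑ k ∈ Finset.range (L + 1),
    qq ^ ((k : ℤ) * ((k : ℤ) + d - n)) * qp L /
      (qp k * qpz ((k : ℤ) + d) * qpz ((L : ℤ) - 2 * k - d))

lemma qq_ne_zero : qq ≠ 0 := RatFunc.X_ne_zero

lemma qq_pow_ne_one (n : ℕ) (h : n ≠ 0) : qq ^ n ≠ 1 := by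
  intro he
  rw [qq, ← RatFunc.algebraMap_X (K := ℚ), ← map_pow, ← map_one (algebraMap (Polynomial ℚ) (RatFunc ℚ))] at he
  have := RatFunc.algebraMap_injective ℚ he
  have := congrArg Polynomial.natDegree this
  simp [Polynomial.natDegree_X_pow] at this
  exact h this

lemma qq_zpow_ne_one (m : ℤ) (h : m ≠ 0) : qq ^ m ≠ 1 := by
  rcases lt_trichotomy m 0 with hm | hm | hm
  · intro he
    have : qq ^ (-m) = 1 := by rw [zpow_neg, he, inv_one]
    rw [show -m = ((-m).toNat : ℤ) by omega, zpow_natCast] at this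
    exact qq_pow_ne_one _ (by omega) this
  · exact absurd hm h
  · rw [show m = (m.toNat : ℤ) by omega, zpow_natCast]
    exact qq_pow_ne_one _ (by omega)

lemma one_sub_qq_zpow_ne_zero (m : ℤ) (h : m ≠ 0) : 1 - qq ^ m ≠ 0 :=
  fun he => qq_zpow_ne_one m h (by linear_combination -he)

lemma qpz_natCast (n : ℕ) : qpz n = qp n := by simp [qpz]

lemma qpz_neg (m : ℤ) (h : m < 0) : qpz m = 0 := by simp [qpz, not_le.2 h]

lemma key (m : ℤ) : (1 - qq ^ m) / qpz m = 1 / qpz (m - 1) := by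
  rcases lt_trichotomy m 0 with hm | hm | hm
  · rw [qpz_neg m hm, qpz_neg (m-1) (by omega), div_zero, div_zero]
  · subst hm; simp [qpz_neg (-1 : ℤ) (by norm_num), qpz]
  · have h1 : qpz m = qpz (m - 1) * (1 - qq ^ m) := by
      rw [qpz, qpz, if_pos hm.le, if_pos (by omega)]
      have h2 : m.toNat = (m-1).toNat + 1 := by omega
      rw [h2, qp_succ]
      congr 2
      rw [← zpow_natCast qq]
      congr 1
      omega
    rw [h1, mul_comm, ← div_div, div_self (one_sub_qq_zpow_ne_zero m (by omega))]

lemma key' (m : ℤ) : (1 - qq ^ m) * (qpz m)⁻¹ = (qpz (m - 1))⁻¹ := by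
  have := key m
  rwa [div_eq_mul_inv, one_div] at this

lemma keyN (k : ℕ) : (1 - qq ^ ((k : ℤ) + 1)) * (qp (k + 1))⁻¹ = (qp k)⁻¹ := by
  have hz : qq ^ ((k : ℤ) + 1) = qq ^ (k + 1) := by
    rw [← zpow_natCast qq (k+1)]; push_cast; ring_nf
  rw [hz, qp_succ, mul_inv, ← mul_assoc, mul_comm (1 - qq ^ (k+1)), mul_assoc,
    mul_inv_cancel₀, mul_one]
  have := one_sub_qq_zpow_ne_zero ((k : ℤ) + 1) (by omega)
  rwa [hz] at this

lemma zkey (a b c : ℤ) :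
    (1 - qq ^ a) + qq ^ a * (1 - qq ^ b) + qq ^ (a + b) * (1 - qq ^ c)
      = 1 - qq ^ (a + b + c) := by
  rw [zpow_add₀ qq_ne_zero (a+b) c, zpow_add₀ qq_ne_zero a b]
  ring

/-- The summand of `qT`. -/
noncomputable def tTerm (n d : ℤ) (M k : ℕ) : RatFunc ℚ :=
  qq ^ ((k : ℤ) * ((k : ℤ) + d - n)) * qp M /
      (qp k * qpz ((k : ℤ) + d) * qpz ((M : ℤ) - 2 * k - d))

lemma qT_eq_sum (n d : ℤ) (L : ℕ) : qT n d L = ∑ k ∈ Finset.range (L + 1), tTerm n d L k := rfl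

lemma tTerm_zero (n d : ℤ) (M k : ℕ) (h : (M : ℤ) < k) : tTerm n d M k = 0 := by
  have : qpz ((k : ℤ) + d) * qpz ((M : ℤ) - 2 * k - d) = 0 := by
    rcases lt_or_ge ((k : ℤ) + d) 0 with hd | hd
    · rw [qpz_neg _ hd, zero_mul]
    · rw [qpz_neg ((M : ℤ) - 2 * k - d) (by omega), mul_zero]
  rw [tTerm, mul_assoc (qp k), this, mul_zero, div_zero]

noncomputable def pA (n d : ℤ) (M k : ℕ) : RatFunc ℚ :=
  qq ^ ((k : ℤ) * ((k : ℤ) + d - n)) * (1 - qq ^ (k : ℤ)) * qp M /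
      (qp k * qpz ((k : ℤ) + d) * qpz ((M : ℤ) + 1 - 2 * k - d))

noncomputable def pB (n d : ℤ) (M k : ℕ) : RatFunc ℚ :=
  qq ^ ((k : ℤ) * ((k : ℤ) + d - n)) * qq ^ (k : ℤ) * (1 - qq ^ ((M : ℤ) + 1 - 2 * k - d)) * qp M /
      (qp k * qpz ((k : ℤ) + d) * qpz ((M : ℤ) + 1 - 2 * k - d))

noncomputable def pC (n d : ℤ) (M k : ℕ) : RatFunc ℚ :=
  qq ^ ((k : ℤ) * ((k : ℤ) + d - n)) * qq ^ ((M : ℤ) + 1 - k - d) * (1 - qq ^ ((k : ℤ) + d)) * qp M /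
      (qp k * qpz ((k : ℤ) + d) * qpz ((M : ℤ) + 1 - 2 * k - d))

lemma tTerm_split (n d : ℤ) (M k : ℕ) :
    tTerm n d (M + 1) k = pA n d M k + pB n d M k + pC n d M k := by
  have h := zkey (k : ℤ) ((M : ℤ) + 1 - 2 * k - d) ((k : ℤ) + d)
  rw [show (k : ℤ) + ((M : ℤ) + 1 - 2 * k - d) = (M : ℤ) + 1 - k - d by ring,
    show (M : ℤ) + 1 - k - d + ((k : ℤ) + d) = (M : ℤ) + 1 by ring] at h
  have hM : qq ^ ((M : ℤ) + 1) = qq ^ (M + 1) := by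
    rw [← zpow_natCast qq (M + 1)]; push_cast; ring_nf
  rw [tTerm, pA, pB, pC, qp_succ]
  rw [show ((↑(M + 1) : ℤ)) - 2 * k - d = (M : ℤ) + 1 - 2 * k - d by push_cast; ring]
  rw [← hM, ← h]
  simp only [div_eq_mul_inv]
  ring

lemma pieceB (n d : ℤ) (M k : ℕ) : pB n d M k = tTerm (n - 1) d M k := by
  have hb := key' ((M : ℤ) + 1 - 2 * k - d)
  rw [show (M : ℤ) + 1 - 2 * k - d - 1 = (M : ℤ) - 2 * k - d by ring] at hb
  rw [pB, tTerm,
    show (k : ℤ) * ((k : ℤ) + d - (n - 1)) = (k : ℤ) * ((k : ℤ) + d - n) + k by ring,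
    zpow_add₀ qq_ne_zero]
  simp only [div_eq_mul_inv, mul_inv]
  linear_combination (qq ^ ((k : ℤ) * ((k : ℤ) + d - n)) * qq ^ (k : ℤ) * qp M *
    (qp k)⁻¹ * (qpz ((k : ℤ) + d))⁻¹) * hb

lemma pieceC (n d : ℤ) (M k : ℕ) :
    pC n d M k = qq ^ ((M : ℤ) + 1 - d) * tTerm n (d - 1) M k := by
  have hb := key' ((k : ℤ) + d)
  rw [show (k : ℤ) + d - 1 = (k : ℤ) + (d - 1) by ring] at hb
  rw [pC, tTerm,
    show (M : ℤ) - 2 * k - (d - 1) = (M : ℤ) + 1 - 2 * k - d by ring,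
    ← zpow_add₀ qq_ne_zero,
    show (k : ℤ) * ((k : ℤ) + d - n) + ((M : ℤ) + 1 - k - d)
      = ((M : ℤ) + 1 - d) + (k : ℤ) * ((k : ℤ) + (d - 1) - n) by ring,
    zpow_add₀ qq_ne_zero]
  set a := qq ^ ((M : ℤ) + 1 - d)
  set b := qq ^ ((k : ℤ) * ((k : ℤ) + (d - 1) - n))
  set w := (1 : RatFunc ℚ) - qq ^ ((k : ℤ) + d)
  simp only [div_eq_mul_inv, mul_inv]
  linear_combination (a * b * qp M * (qp k)⁻¹ * (qpz ((M : ℤ) + 1 - 2 * k - d))⁻¹) * hb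

lemma pieceA (n d : ℤ) (M k : ℕ) :
    pA n d M (k + 1) = qq ^ (d - n + 1) * tTerm (n - 1) (d + 1) M k := by
  have hb := keyN k
  rw [pA, tTerm]
  push_cast
  rw [show ((k : ℤ) + 1) * ((k : ℤ) + 1 + d - n)
      = (d - n + 1) + (k : ℤ) * ((k : ℤ) + (d + 1) - (n - 1)) by ring,
    show (M : ℤ) + 1 - 2 * ((k : ℤ) + 1) - d = (M : ℤ) - 2 * k - (d + 1) by ring,
    show (k : ℤ) + 1 + d = (k : ℤ) + (d + 1) by ring,
    zpow_add₀ qq_ne_zero]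
  set a := qq ^ (d - n + 1)
  set b := qq ^ ((k : ℤ) * ((k : ℤ) + (d + 1) - (n - 1)))
  set w := (1 : RatFunc ℚ) - qq ^ ((k : ℤ) + 1)
  simp only [div_eq_mul_inv, mul_inv]
  linear_combination (a * b * qp M * (qpz ((k : ℤ) + (d + 1)))⁻¹ *
    (qpz ((M : ℤ) - 2 * k - (d + 1)))⁻¹) * hb

lemma pA_zero (n d : ℤ) (M : ℕ) : pA n d M 0 = 0 := by
  simp [pA]

/-- For `L > 0`:
`T(n,d,L) = q^{L-d} T(n,d-1,L-1) + T(n-1,d,L-1) + q^{d-n+1} T(n-1,d+1,L-1)`. -/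
theorem qT_recurrence₂ (n d : ℤ) (L : ℕ) (hL : 0 < L) :
    qT n d L =
      qq ^ ((L : ℤ) - d) * qT n (d - 1) (L - 1) + qT (n - 1) d (L - 1) +
        qq ^ (d - n + 1) * qT (n - 1) (d + 1) (L - 1) := by
  obtain ⟨M, rfl⟩ : ∃ M, L = M + 1 := ⟨L - 1, by omega⟩
  simp only [Nat.add_sub_cancel]
  rw [qT_eq_sum n d (M + 1)]
  rw [show M + 1 + 1 = M + 2 from rfl]
  have hsplit : ∑ k ∈ Finset.range (M + 2), tTerm n d (M + 1) k
      = (∑ k ∈ Finset.range (M + 2), pA n d M k)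
        + (∑ k ∈ Finset.range (M + 2), pB n d M k)
        + (∑ k ∈ Finset.range (M + 2), pC n d M k) := by
    rw [← Finset.sum_add_distrib, ← Finset.sum_add_distrib]
    exact Finset.sum_congr rfl fun k _ => tTerm_split n d M k
  rw [hsplit]
  have hA : ∑ k ∈ Finset.range (M + 2), pA n d M k
      = qq ^ (d - n + 1) * qT (n - 1) (d + 1) M := by
    rw [Finset.sum_range_succ', pA_zero, add_zero, qT_eq_sum, Finset.mul_sum]
    exact Finset.sum_congr rfl fun k _ => pieceA n d M k
  have hB : ∑ k ∈ Finset.range (M + 2), pB n d M k = qT (n - 1) d M := by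
    rw [show ∑ k ∈ Finset.range (M + 2), pB n d M k
        = ∑ k ∈ Finset.range (M + 2), tTerm (n - 1) d M k from
      Finset.sum_congr rfl fun k _ => pieceB n d M k]
    rw [Finset.sum_range_succ, tTerm_zero (n - 1) d M (M + 1) (by push_cast; omega), add_zero,
      qT_eq_sum]
  have hC : ∑ k ∈ Finset.range (M + 2), pC n d M k
      = qq ^ ((↑(M + 1) : ℤ) - d) * qT n (d - 1) M := by
    rw [show ∑ k ∈ Finset.range (M + 2), pC n d M k
        = ∑ k ∈ Finset.range (M + 2), qq ^ ((M : ℤ) + 1 - d) * tTerm n (d - 1) M k from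
      Finset.sum_congr rfl fun k _ => pieceC n d M k]
    rw [← Finset.mul_sum, Finset.sum_range_succ,
      tTerm_zero n (d - 1) M (M + 1) (by push_cast; omega), add_zero, qT_eq_sum]
    congr 1
  rw [hA, hB, hC]
  ring
end

section
/- As formal power series in q, the limit of the q-trinomial coefficient T(1, d, L) as L → ∞ equals (1 + q^d)/(q)_∞, for every fixed integer d ≥ 0. -/
open PowerSeries

/-- `(q)_n = ∏_{i=1}^n (1 - q^i)` as a formal power series in `q = X`. -/
noncomputable def qpPS (n : ℕ) : PowerSeries ℚ :=
  ∏ i ∈ Finset.range n, (1 - (X : PowerSeries ℚ) ^ (i + 1))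

/-- `(q)_n` for an integer index, `0` for negative `n`. -/
noncomputable def qpzPS (n : ℤ) : PowerSeries ℚ :=
  if 0 ≤ n then qpPS n.toNat else 0

/-- The Andrews–Baxter `q`-trinomial coefficient
`T(n,d,L) = Σ_k q^{k(k+d-n)} (q)_L / ((q)_k (q)_{k+d} (q)_{L-2k-d})`
as a formal power series (all exponents occurring here are nonnegative
for the instances `n ∈ {0,1}`, `d ≥ 0` used below); terms with a negative
factorial index vanish, since the inverse of `0` is `0`. -/
noncomputable def qTps (n d : ℤ) (L : ℕ) : PowerSeries ℚ :=
  ∑ k ∈ Finset.range (L + 1),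
    (X : PowerSeries ℚ) ^ ((k : ℤ) * ((k : ℤ) + d - n)).toNat * qpPS L *
      (qpPS k * qpzPS ((k : ℤ) + d) * qpzPS ((L : ℤ) - 2 * k - d))⁻¹

namespace QTlim

/-- Congruence modulo `X^n`. -/
def Cong (n : ℕ) (a b : PowerSeries ℚ) : Prop := (X : PowerSeries ℚ) ^ n ∣ (a - b)

lemma cong_refl (n : ℕ) (a : PowerSeries ℚ) : Cong n a a := by simp [Cong]

lemma cong_of_eq {n : ℕ} {a b : PowerSeries ℚ} (h : a = b) : Cong n a b := by
  simp [Cong, h]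

lemma cong_symm {n : ℕ} {a b : PowerSeries ℚ} (h : Cong n a b) : Cong n b a := by
  have := dvd_neg.mpr h
  rwa [neg_sub] at this

lemma cong_trans {n : ℕ} {a b c : PowerSeries ℚ} (h1 : Cong n a b) (h2 : Cong n b c) :
    Cong n a c := by
  have := dvd_add h1 h2
  rwa [sub_add_sub_cancel] at this

lemma cong_add {n : ℕ} {a b c d : PowerSeries ℚ} (h1 : Cong n a b) (h2 : Cong n c d) :
    Cong n (a + c) (b + d) := by
  have := dvd_add h1 h2
  rwa [show a - b + (c - d) = a + c - (b + d) by ring] at this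

lemma cong_sub {n : ℕ} {a b c d : PowerSeries ℚ} (h1 : Cong n a b) (h2 : Cong n c d) :
    Cong n (a - c) (b - d) := by
  have := dvd_sub h1 h2
  rwa [show a - b - (c - d) = a - c - (b - d) by ring] at this

lemma cong_mul {n : ℕ} {a b c d : PowerSeries ℚ} (h1 : Cong n a b) (h2 : Cong n c d) :
    Cong n (a * c) (b * d) := by
  have := dvd_add (h2.mul_left a) (h1.mul_right d)
  rwa [show a * (c - d) + (a - b) * d = a * c - b * d by ring] at this

lemma cong_sum {n : ℕ} {ι : Type*} (s : Finset ι) (f g : ι → PowerSeries ℚ)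
    (h : ∀ i ∈ s, Cong n (f i) (g i)) :
    Cong n (∑ i ∈ s, f i) (∑ i ∈ s, g i) := by
  rw [Cong, ← Finset.sum_sub_distrib]
  exact Finset.dvd_sum h

lemma cong_zero {n : ℕ} {a : PowerSeries ℚ} (h : (X : PowerSeries ℚ) ^ n ∣ a) :
    Cong n a 0 := by rwa [Cong, sub_zero]

lemma coeff_eq_of_cong {N : ℕ} {a b : PowerSeries ℚ} (h : Cong (N + 1) a b) :
    PowerSeries.coeff N a = PowerSeries.coeff N b := by
  have h0 := (PowerSeries.X_pow_dvd_iff.mp h) N (Nat.lt_succ_self N)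
  rw [map_sub] at h0
  exact sub_eq_zero.mp h0

lemma constC_qpPS (m : ℕ) : PowerSeries.constantCoeff (qpPS m) = 1 := by
  rw [qpPS, map_prod]
  apply Finset.prod_eq_one
  intro i _
  simp

lemma constC_qpPS_ne (m : ℕ) : PowerSeries.constantCoeff (qpPS m) ≠ 0 := by
  rw [constC_qpPS]; norm_num

lemma qpPS_mul_inv (m : ℕ) : qpPS m * (qpPS m)⁻¹ = 1 :=
  PowerSeries.mul_inv_cancel _ (constC_qpPS_ne m)

lemma cong_inv {n : ℕ} {a b : PowerSeries ℚ} (ha : PowerSeries.constantCoeff a ≠ 0)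
    (hb : PowerSeries.constantCoeff b ≠ 0) (h : Cong n a b) : Cong n a⁻¹ b⁻¹ := by
  have h1 : a * a⁻¹ = 1 := PowerSeries.mul_inv_cancel _ ha
  have h2 : b * b⁻¹ = 1 := PowerSeries.mul_inv_cancel _ hb
  have key : a⁻¹ - b⁻¹ = a⁻¹ * (b - a) * b⁻¹ := by
    linear_combination b⁻¹ * h1 - a⁻¹ * h2
  rw [Cong, key]
  have h' : (X : PowerSeries ℚ) ^ n ∣ b - a := by
    have := dvd_neg.mpr h; rwa [neg_sub] at this
  exact (h'.mul_left _).mul_right _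

lemma qpPS_le (m M : ℕ) (h : m ≤ M) :
    qpPS M = qpPS m * ∏ i ∈ Finset.Ico m M, (1 - (X : PowerSeries ℚ) ^ (i + 1)) := by
  rw [qpPS, qpPS, Finset.prod_range_mul_prod_Ico _ h]

lemma cong_one_prod {n : ℕ} (s : Finset ℕ) (h : ∀ i ∈ s, n ≤ i + 1) :
    Cong n (∏ i ∈ s, (1 - (X : PowerSeries ℚ) ^ (i + 1))) 1 := by
  classical
  induction s using Finset.induction_on with
  | empty => exact cong_of_eq (by simp)
  | @insert a s' hx ih =>
    rw [Finset.prod_insert hx]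
    have hfac : Cong n (1 - (X : PowerSeries ℚ) ^ (a + 1)) 1 := by
      rw [Cong, show (1 - (X : PowerSeries ℚ) ^ (a + 1)) - 1 = -(X ^ (a + 1)) by ring]
      exact dvd_neg.mpr (pow_dvd_pow _ (h a (Finset.mem_insert_self a s')))
    have := cong_mul hfac (ih fun i hi => h i (Finset.mem_insert_of_mem hi))
    rwa [one_mul] at this

lemma qpPS_cong {n m M : ℕ} (h1 : n ≤ m) (h2 : m ≤ M) : Cong n (qpPS M) (qpPS m) := by
  rw [qpPS_le m M h2]
  have hp : Cong n (∏ i ∈ Finset.Ico m M, (1 - (X : PowerSeries ℚ) ^ (i + 1))) 1 :=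
    cong_one_prod _ fun i hi => by
      have := (Finset.mem_Ico.mp hi).1; omega
  have := cong_mul (cong_refl n (qpPS m)) hp
  rwa [mul_one] at this

lemma one_sub_mul_inv_succ (m : ℕ) :
    (1 - (X : PowerSeries ℚ) ^ (m + 1)) * (qpPS (m + 1))⁻¹ = (qpPS m)⁻¹ := by
  have hc : PowerSeries.constantCoeff (1 - (X : PowerSeries ℚ) ^ (m + 1)) ≠ 0 := by
    simp
  rw [show qpPS (m + 1) = qpPS m * (1 - (X : PowerSeries ℚ) ^ (m + 1)) from
    Finset.prod_range_succ _ m, PowerSeries.mul_inv_rev, ← mul_assoc,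
    PowerSeries.mul_inv_cancel _ hc, one_mul]

/-- term of the `T(0,·)`-type sum. -/
noncomputable def tA (e k : ℕ) : PowerSeries ℚ :=
  (X : PowerSeries ℚ) ^ (k * (k + e)) * ((qpPS k)⁻¹ * (qpPS (k + e))⁻¹)

noncomputable def A (K e : ℕ) : PowerSeries ℚ := ∑ k ∈ Finset.range K, tA e k

/-- term of the `T(1,·)`-type sum. -/
noncomputable def tS (e k : ℕ) : PowerSeries ℚ :=
  (X : PowerSeries ℚ) ^ (k * (k + e - 1)) * ((qpPS k)⁻¹ * (qpPS (k + e))⁻¹)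

noncomputable def S (K e : ℕ) : PowerSeries ℚ := ∑ k ∈ Finset.range K, tS e k

noncomputable def U (e k : ℕ) : PowerSeries ℚ :=
  (X : PowerSeries ℚ) ^ (k * (k + e)) *
    ((1 - (X : PowerSeries ℚ) ^ k) * ((qpPS k)⁻¹ * (qpPS (k + e + 1))⁻¹))

lemma tA_term_eq (e k : ℕ) :
    tA e k = U e k + tA (e + 1) k - (X : PowerSeries ℚ) ^ (e + 1) * tA (e + 1) k := by
  have hsplit : (qpPS (k + e))⁻¹ =
      (1 - (X : PowerSeries ℚ) ^ (k + e + 1)) * (qpPS (k + e + 1))⁻¹ :=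
    (one_sub_mul_inv_succ (k + e)).symm
  have hq : k + (e + 1) = k + e + 1 := by omega
  rw [tA, U, tA, hq, hsplit]
  have e1 : (X : PowerSeries ℚ) ^ (k * (k + e + 1))
      = (X : PowerSeries ℚ) ^ (k * (k + e)) * (X : PowerSeries ℚ) ^ k := by
    rw [← pow_add]; congr 1 <;> ring
  have e2 : (X : PowerSeries ℚ) ^ (k + e + 1)
      = (X : PowerSeries ℚ) ^ k * (X : PowerSeries ℚ) ^ (e + 1) := by
    rw [← pow_add]; congr 1 <;> ring
  rw [e1, e2]
  ring

lemma U_zero (e : ℕ) : U e 0 = 0 := by simp [U]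

lemma U_shift (e j : ℕ) : U e (j + 1) = (X : PowerSeries ℚ) ^ (e + 1) * tA (e + 2) j := by
  rw [U, tA]
  have h1 : (1 - (X : PowerSeries ℚ) ^ (j + 1)) * ((qpPS (j + 1))⁻¹ * (qpPS (j + 1 + e + 1))⁻¹)
      = (qpPS j)⁻¹ * (qpPS (j + 1 + e + 1))⁻¹ := by
    rw [← mul_assoc, one_sub_mul_inv_succ j]
  rw [h1]
  have h2 : (j + 1) * (j + 1 + e) = (e + 1) + j * (j + (e + 2)) := by ring
  have h3 : j + 1 + e + 1 = j + (e + 2) := by ring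
  rw [h2, h3, pow_add] <;> ring

lemma tA_dvd {n e k : ℕ} (h : n ≤ k * (k + e)) : (X : PowerSeries ℚ) ^ n ∣ tA e k :=
  (pow_dvd_pow _ h).mul_right _

lemma A_rec (N e : ℕ) :
    Cong (N + 1) (A (N + 2) e)
      (A (N + 2) (e + 1) + (X : PowerSeries ℚ) ^ (e + 1) * A (N + 2) (e + 2)
        - (X : PowerSeries ℚ) ^ (e + 1) * A (N + 2) (e + 1)) := by
  have hU : ∑ k ∈ Finset.range (N + 2), U e k
      = (X : PowerSeries ℚ) ^ (e + 1) * (A (N + 2) (e + 2) - tA (e + 2) (N + 1)) := by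
    rw [Finset.sum_range_succ' (U e) (N + 1), U_zero, add_zero]
    have : ∀ j, U e (j + 1) = (X : PowerSeries ℚ) ^ (e + 1) * tA (e + 2) j := U_shift e
    rw [Finset.sum_congr rfl fun j _ => this j, ← Finset.mul_sum]
    congr 1
    rw [A, Finset.sum_range_succ (tA (e + 2)) (N + 1)]
    ring
  have hA : A (N + 2) e = (∑ k ∈ Finset.range (N + 2), U e k)
      + A (N + 2) (e + 1) - (X : PowerSeries ℚ) ^ (e + 1) * A (N + 2) (e + 1) := by
    simp only [A, Finset.mul_sum, ← Finset.sum_add_distrib, ← Finset.sum_sub_distrib]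
    exact Finset.sum_congr rfl fun k _ => by rw [tA_term_eq e k]
  rw [hA, hU]
  have herr : Cong (N + 1) (tA (e + 2) (N + 1)) 0 := by
    apply cong_zero
    apply tA_dvd
    have : 1 * (N + 1) ≤ (N + 1) * ((N + 1) + (e + 2)) :=
      Nat.mul_le_mul (by omega) (by omega)
    omega
  have : Cong (N + 1)
      ((X : PowerSeries ℚ) ^ (e + 1) * (A (N + 2) (e + 2) - tA (e + 2) (N + 1))
        + A (N + 2) (e + 1) - (X : PowerSeries ℚ) ^ (e + 1) * A (N + 2) (e + 1))
      ((X : PowerSeries ℚ) ^ (e + 1) * (A (N + 2) (e + 2) - 0)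
        + A (N + 2) (e + 1) - (X : PowerSeries ℚ) ^ (e + 1) * A (N + 2) (e + 1)) := by
    refine cong_sub (cong_add (cong_mul (cong_refl _ _) (cong_sub (cong_refl _ _) herr))
      (cong_refl _ _)) (cong_refl _ _)
  refine cong_trans this (cong_of_eq ?_)
  ring

lemma one_inv : ((1 : PowerSeries ℚ))⁻¹ = 1 := by
  have := PowerSeries.mul_inv_cancel (1 : PowerSeries ℚ) (by simp)
  rwa [one_mul] at this

lemma qpPS_zero : qpPS 0 = 1 := by simp [qpPS]

lemma tA_zero (e : ℕ) : tA e 0 = (qpPS e)⁻¹ := by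
  simp [tA, qpPS_zero, one_inv]

lemma A_tail (N e : ℕ) (he : N + 1 ≤ e) :
    Cong (N + 1) (A (N + 2) e) ((qpPS (N + 1))⁻¹) := by
  rw [A, Finset.sum_range_succ' (tA e) (N + 1), tA_zero]
  have hsum : Cong (N + 1) (∑ j ∈ Finset.range (N + 1), tA e (j + 1))
      (∑ _j ∈ Finset.range (N + 1), (0 : PowerSeries ℚ)) := by
    refine cong_sum _ _ _ fun j _ => cong_zero (tA_dvd ?_)
    have : 1 * (e + 1) ≤ (j + 1) * ((j + 1) + e) := Nat.mul_le_mul (by omega) (by omega)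
    omega
  have h1 : Cong (N + 1) ((∑ j ∈ Finset.range (N + 1), tA e (j + 1)) + (qpPS e)⁻¹)
      (0 + (qpPS e)⁻¹) := by
    refine cong_add (cong_trans hsum (cong_of_eq ?_)) (cong_refl _ _)
    simp
  refine cong_trans h1 ?_
  rw [zero_add]
  exact cong_inv (constC_qpPS_ne e) (constC_qpPS_ne (N + 1)) (qpPS_cong le_rfl he)

lemma A_const (N : ℕ) : ∀ t e : ℕ, N + 1 ≤ e + t →
    Cong (N + 1) (A (N + 2) e) ((qpPS (N + 1))⁻¹) := by
  intro t
  induction t with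
  | zero => intro e he; exact A_tail N e (by omega)
  | succ t ih =>
    intro e he
    by_cases hcase : N + 1 ≤ e
    · exact A_tail N e hcase
    · have IH1 := ih (e + 1) (by omega)
      have IH2 := ih (e + 2) (by omega)
      refine cong_trans (A_rec N e) ?_
      have : Cong (N + 1)
          (A (N + 2) (e + 1) + (X : PowerSeries ℚ) ^ (e + 1) * A (N + 2) (e + 2)
            - (X : PowerSeries ℚ) ^ (e + 1) * A (N + 2) (e + 1))
          ((qpPS (N + 1))⁻¹ + (X : PowerSeries ℚ) ^ (e + 1) * (qpPS (N + 1))⁻¹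
            - (X : PowerSeries ℚ) ^ (e + 1) * (qpPS (N + 1))⁻¹) :=
        cong_sub (cong_add IH1 (cong_mul (cong_refl _ _) IH2))
          (cong_mul (cong_refl _ _) IH1)
      refine cong_trans this (cong_of_eq (by ring))
  
lemma A_all (N e : ℕ) : Cong (N + 1) (A (N + 2) e) ((qpPS (N + 1))⁻¹) :=
  A_const N (N + 1) e (by omega)

noncomputable def W (e k : ℕ) : PowerSeries ℚ :=
  (X : PowerSeries ℚ) ^ (k * (k + e - 1)) *
    ((1 - (X : PowerSeries ℚ) ^ (k + e)) * ((qpPS k)⁻¹ * (qpPS (k + e))⁻¹))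

lemma exp_key (e k : ℕ) : k * (k + e - 1) + (k + e) = e + k * (k + e) := by
  cases k with
  | zero => simp
  | succ j =>
    have h : j + 1 + e - 1 = j + e := by omega
    rw [h]
    ring

lemma tS_term_eq (e k : ℕ) : tS e k = W e k + (X : PowerSeries ℚ) ^ e * tA e k := by
  rw [tS, W, tA]
  have e3 : (X : PowerSeries ℚ) ^ e * (X : PowerSeries ℚ) ^ (k * (k + e))
      = (X : PowerSeries ℚ) ^ (k * (k + e - 1)) * (X : PowerSeries ℚ) ^ (k + e) := by
    rw [← pow_add, ← pow_add]; congr 1; exact (exp_key e k).symm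
  linear_combination (-((qpPS k)⁻¹ * (qpPS (k + e))⁻¹)) * e3

lemma S_decomp (N e : ℕ) :
    S (N + 2) e = (∑ k ∈ Finset.range (N + 2), W e k)
      + (X : PowerSeries ℚ) ^ e * A (N + 2) e := by
  rw [S, A, Finset.mul_sum, ← Finset.sum_add_distrib]
  exact Finset.sum_congr rfl fun k _ => tS_term_eq e k

lemma W_succ (f k : ℕ) : W (f + 1) k = tA f k := by
  rw [W, tA]
  have h1 : k + (f + 1) - 1 = k + f := by omega
  have h2 : k + (f + 1) = (k + f) + 1 := by omega
  rw [h1, h2]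
  have hm := one_sub_mul_inv_succ (k + f)
  linear_combination ((X : PowerSeries ℚ) ^ (k * (k + f)) * (qpPS k)⁻¹) * hm

lemma W_zero_zero : W 0 0 = 0 := by simp [W]

lemma W_zero_succ (j : ℕ) : W 0 (j + 1) = tA 1 j := by
  rw [W, tA]
  have h1 : j + 1 + 0 - 1 = j := by omega
  have h2 : j + 1 + 0 = j + 1 := by omega
  rw [h1, h2]
  have hm := one_sub_mul_inv_succ j
  linear_combination ((X : PowerSeries ℚ) ^ ((j + 1) * j) * (qpPS (j + 1))⁻¹) * hm

lemma S_total (N e : ℕ) :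
    Cong (N + 1) (S (N + 2) e)
      ((1 + (X : PowerSeries ℚ) ^ e) * (qpPS (N + 1))⁻¹) := by
  cases e with
  | succ f =>
    have hS : S (N + 2) (f + 1) = A (N + 2) f
        + (X : PowerSeries ℚ) ^ (f + 1) * A (N + 2) (f + 1) := by
      rw [S_decomp N (f + 1)]
      congr 1
      rw [A]
      exact Finset.sum_congr rfl fun k _ => W_succ f k
    rw [hS]
    have hc := cong_add (A_all N f)
      (cong_mul (cong_refl (N + 1) ((X : PowerSeries ℚ) ^ (f + 1))) (A_all N (f + 1)))
    exact cong_trans hc (cong_of_eq (by ring))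
  | zero =>
    have hW : ∑ k ∈ Finset.range (N + 2), W 0 k = A (N + 2) 1 - tA 1 (N + 1) := by
      rw [Finset.sum_range_succ' (W 0) (N + 1), W_zero_zero, add_zero]
      rw [Finset.sum_congr rfl fun j _ => W_zero_succ j]
      rw [A, Finset.sum_range_succ (tA 1) (N + 1)]
      ring
    rw [S_decomp N 0, hW]
    have herr : Cong (N + 1) (tA 1 (N + 1)) 0 := by
      apply cong_zero
      apply tA_dvd
      have : 1 * (N + 1) ≤ (N + 1) * ((N + 1) + 1) := Nat.mul_le_mul (by omega) (by omega)
      omega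
    have hc := cong_add (cong_sub (A_all N 1) herr)
      (cong_mul (cong_refl (N + 1) ((X : PowerSeries ℚ) ^ 0)) (A_all N 0))
    exact cong_trans hc (cong_of_eq (by ring))

end QTlim

/-- As formal power series in `q` (coefficientwise), `T(1,d,L) → (1+q^d)/(q)_∞`
as `L → ∞`, for every fixed integer `d ≥ 0`.  The `N`-th coefficient of
`1/(q)_∞` is that of `1/(q)_M` for any `M ≥ N` (here `M = N+1`). -/
theorem qT_one_limit (d : ℤ) (hd : 0 ≤ d) :
    ∀ N : ℕ, ∃ L0 : ℕ, ∀ L : ℕ, L0 ≤ L →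
      PowerSeries.coeff N (qTps 1 d L) =
        PowerSeries.coeff N ((1 + (X : PowerSeries ℚ) ^ d.toNat) * (qpPS (N + 1))⁻¹) := by
  intro N
  refine ⟨3 * N + 3 + d.toNat, fun L hL => ?_⟩
  set e := d.toNat with he
  have hd' : d = (e : ℤ) := by omega
  rw [qTps, map_sum]
  have hsub : Finset.range (N + 2) ⊆ Finset.range (L + 1) :=
    Finset.range_subset_range.mpr (by omega)
  have hsmall : ∀ k ∈ Finset.range (L + 1), k ∉ Finset.range (N + 2) →
      (PowerSeries.coeff N) ((X : PowerSeries ℚ) ^ ((k : ℤ) * ((k : ℤ) + d - 1)).toNat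
        * qpPS L *
        (qpPS k * qpzPS ((k : ℤ) + d) * qpzPS ((L : ℤ) - 2 * k - d))⁻¹) = 0 := by
    intro k _ hk
    have hk2 : N + 2 ≤ k := by simp [Finset.mem_range] at hk; omega
    have hk2' : (N + 2 : ℤ) ≤ (k : ℤ) := by exact_mod_cast hk2
    have hbig : (N + 1 : ℤ) ≤ (k : ℤ) * ((k : ℤ) + d - 1) := by nlinarith [hd, hk2']
    have hdvd : (X : PowerSeries ℚ) ^ (N + 1) ∣
        ((X : PowerSeries ℚ) ^ ((k : ℤ) * ((k : ℤ) + d - 1)).toNat * qpPS L *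
          (qpPS k * qpzPS ((k : ℤ) + d) * qpzPS ((L : ℤ) - 2 * k - d))⁻¹) :=
      Dvd.dvd.mul_right (Dvd.dvd.mul_right (pow_dvd_pow _ (by omega)) _) _
    exact PowerSeries.X_pow_dvd_iff.mp hdvd N (by omega)
  rw [← Finset.sum_subset hsub hsmall]
  have hterm : ∀ k ∈ Finset.range (N + 2),
      (PowerSeries.coeff N) ((X : PowerSeries ℚ) ^ ((k : ℤ) * ((k : ℤ) + d - 1)).toNat
        * qpPS L *
        (qpPS k * qpzPS ((k : ℤ) + d) * qpzPS ((L : ℤ) - 2 * k - d))⁻¹)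
      = (PowerSeries.coeff N) (QTlim.tS e k) := by
    intro k hk
    have hkle : k ≤ N + 1 := by simp [Finset.mem_range] at hk; omega
    apply QTlim.coeff_eq_of_cong
    have hexp : ((k : ℤ) * ((k : ℤ) + d - 1)).toNat = k * (k + e - 1) := by
      rcases k with _ | j
      · simp
      · have h1 : ((j + 1 : ℕ) : ℤ) * (((j + 1 : ℕ) : ℤ) + d - 1)
            = (((j + 1) * (j + e) : ℕ) : ℤ) := by
          rw [hd']; push_cast; ring
        rw [h1, Int.toNat_natCast]
        have h2 : j + 1 + e - 1 = j + e := by omega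
        rw [h2]
    have hz1 : qpzPS ((k : ℤ) + d) = qpPS (k + e) := by
      rw [qpzPS, if_pos (by omega : (0 : ℤ) ≤ (k : ℤ) + d)]
      have h3 : ((k : ℤ) + d).toNat = k + e := by omega
      rw [h3]
    have hz2 : qpzPS ((L : ℤ) - 2 * k - d) = qpPS (L - (2 * k + e)) := by
      rw [qpzPS, if_pos (by omega : (0 : ℤ) ≤ (L : ℤ) - 2 * k - d)]
      have h3 : ((L : ℤ) - 2 * k - d).toNat = L - (2 * k + e) := by omega
      rw [h3]
    rw [hexp, hz1, hz2, PowerSeries.mul_inv_rev, PowerSeries.mul_inv_rev]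
    set M := L - (2 * k + e) with hM
    have hM1 : N + 1 ≤ M := by omega
    have hML : M ≤ L := by omega
    have hLM : QTlim.Cong (N + 1) (qpPS L * (qpPS M)⁻¹) 1 := by
      have h1 := QTlim.cong_mul (QTlim.qpPS_cong hM1 hML)
        (QTlim.cong_refl (N + 1) ((qpPS M)⁻¹))
      rwa [QTlim.qpPS_mul_inv M] at h1
    have h2 := QTlim.cong_mul hLM (QTlim.cong_refl (N + 1) (QTlim.tS e k))
    rw [one_mul] at h2
    refine QTlim.cong_trans (QTlim.cong_of_eq ?_) h2
    rw [QTlim.tS]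
    ring
  rw [Finset.sum_congr rfl hterm, ← map_sum]
  exact QTlim.coeff_eq_of_cong (QTlim.S_total N e)
end

section
/- Let h and h' be ABF paths of the same length L, equal at all positions 0 ≤ i ≤ L, with the same boundary parameter f, where h has presegment parameter e = 0 and h' has e = 1 (i.e. h_{-1} = h_0 + 1 and h'_{-1} = h'_0 − 1). Then w(h) = w(h'). Moreover, if h_L = 1 and paths h^{(e,1)}, h^{(e,0)} agree on positions 0 ≤ i ≤ L but have f = 1 and f = 0 respectively, then w(h^{(e,1)}) = w(h^{(e,0)}) + L/2. -/
/-- The weight `w(h) = (1/4) Σ_{i=1}^L i·|h_{i+1} − h_{i-1}|` of an ABF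
path of length `L` (the path is the restriction of `h : ℤ → ℤ` to
positions `-1, 0, …, L+1`). -/
def abfWeight (L : ℕ) (h : ℤ → ℤ) : ℚ :=
  (1 / 4 : ℚ) * ∑ i ∈ Finset.Icc 1 L, (i : ℚ) * ((h ((i : ℤ) + 1) - h ((i : ℤ) - 1)).natAbs : ℚ)

/-- The ABF step condition for `h` restricted to positions `-1, …, L+1`:
`|h_i − h_{i-1}| = 1` for `0 ≤ i ≤ L+1`. -/
def abfSteps (L : ℕ) (h : ℤ → ℤ) : Prop :=
  ∀ i : ℤ, 0 ≤ i → i ≤ (L : ℤ) + 1 → (h i - h (i - 1)).natAbs = 1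

/-- (1)  Changing the presegment parameter from `e = 0` (so `h_{-1} = h_0 + 1`)
to `e = 1` (so `h'_{-1} = h'_0 − 1`) does not change the weight of an ABF
path: if `h` and `h'` agree at positions `0, …, L` and have the same
postsegment (`h_{L+1} = h'_{L+1}`), then `w(h) = w(h')`.
(2)  If `h_L = 1` within the `(1,p)`-restricted band and the two paths
`h^{(e,1)}`, `h^{(e,0)}` agree on positions `0, …, L` but have `f = 1`
(`h_{L+1} = h_L − 1`) and `f = 0` (`h_{L+1} = h_L + 1`) respectively, then
`w(h^{(e,1)}) = w(h^{(e,0)}) + L/2`. -/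
theorem abfWeight_presegment_and_b_one :
    (∀ (L : ℕ) (h h' : ℤ → ℤ), abfSteps L h → abfSteps L h' →
        (∀ i : ℤ, 0 ≤ i → i ≤ (L : ℤ) → h i = h' i) →
        h (-1) = h 0 + 1 → h' (-1) = h' 0 - 1 →
        h ((L : ℤ) + 1) = h' ((L : ℤ) + 1) →
        abfWeight L h = abfWeight L h') ∧
    (∀ (p L : ℕ) (h h' : ℤ → ℤ), abfSteps L h → abfSteps L h' →
        (∀ i : ℤ, 0 ≤ i → i ≤ (L : ℤ) → 1 ≤ h i ∧ h i ≤ (p : ℤ)) →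
        (∀ i : ℤ, 0 ≤ i → i ≤ (L : ℤ) → h i = h' i) →
        h (L : ℤ) = 1 →
        h ((L : ℤ) + 1) = h (L : ℤ) - 1 →
        h' ((L : ℤ) + 1) = h' (L : ℤ) + 1 →
        abfWeight L h = abfWeight L h' + (L : ℚ) / 2) := by
  constructor
  · intro L h h' _ _ agree _ _ hend
    unfold abfWeight
    congr 1
    apply Finset.sum_congr rfl
    intro i hi
    obtain ⟨h1, h2⟩ := Finset.mem_Icc.mp hi
    have e1 : h ((i : ℤ) - 1) = h' ((i : ℤ) - 1) := by
      apply agree <;> omega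
    have e2 : h ((i : ℤ) + 1) = h' ((i : ℤ) + 1) := by
      rcases Nat.lt_or_ge i L with hlt | hge
      · apply agree <;> omega
      · have : i = L := le_antisymm h2 hge
        subst this
        exact hend
    rw [e1, e2]
  · intro p L h h' s s' band agree hL hf hf'
    match L with
    | 0 => simp [abfWeight]
    | Nat.succ n =>
      have hcast : ((Nat.succ n : ℕ) : ℤ) = (n : ℤ) + 1 := by push_cast; ring
      have hlm1 : h ((n : ℤ)) = 2 := by
        have hs := s ((n : ℤ) + 1) (by positivity) (by omega)
        have hb := (band (n : ℤ) (by positivity) (by omega)).1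
        rw [hcast] at hL
        simp only [add_sub_cancel_right] at hs
        omega
      have hlm1' : h' ((n : ℤ)) = 2 := by
        rw [← agree (n : ℤ) (by positivity) (by omega)]; exact hlm1
      have hL' : h' ((n : ℤ) + 1) = 1 := by
        rw [← agree ((n : ℤ) + 1) (by positivity) (by omega), ← hcast]; exact hL
      rw [hcast] at hL hf hf'
      unfold abfWeight
      rw [Finset.sum_Icc_succ_top (by omega), Finset.sum_Icc_succ_top (by omega)]
      have hsum : ∑ i ∈ Finset.Icc 1 n, (i : ℚ) * ((h ((i : ℤ) + 1) - h ((i : ℤ) - 1)).natAbs : ℚ)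
          = ∑ i ∈ Finset.Icc 1 n, (i : ℚ) * ((h' ((i : ℤ) + 1) - h' ((i : ℤ) - 1)).natAbs : ℚ) := by
        apply Finset.sum_congr rfl
        intro i hi
        obtain ⟨h1, h2⟩ := Finset.mem_Icc.mp hi
        rw [agree ((i : ℤ) - 1) (by omega) (by push_cast; omega),
          agree ((i : ℤ) + 1) (by omega) (by push_cast; omega)]
      have t1 : h (((n + 1 : ℕ) : ℤ) + 1) - h (((n + 1 : ℕ) : ℤ) - 1) = -2 := by
        push_cast
        rw [show (n : ℤ) + 1 + 1 = ((n : ℤ) + 1) + 1 from rfl, hf, hL,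
          show (n : ℤ) + 1 - 1 = (n : ℤ) by ring, hlm1]
        norm_num
      have t2 : h' (((n + 1 : ℕ) : ℤ) + 1) - h' (((n + 1 : ℕ) : ℤ) - 1) = 0 := by
        push_cast
        rw [show (n : ℤ) + 1 + 1 = ((n : ℤ) + 1) + 1 from rfl, hf', hL',
          show (n : ℤ) + 1 - 1 = (n : ℤ) by ring, hlm1']
        norm_num
      rw [hsum, t1, t2]
      push_cast
      ring
end
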